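/- Let m ≥ 2 be an integer, c ∈ ℝ, and p̂(n) = (log n + c)/n (considered for n large enough that p̂(n) ∈ [0,1]). Then there exists a constant C > 0 such that the conditional probability P( exp(B_m(n, p̂(n))) ≤ C·n·(log n)³ | every matrix of B_m(n, p̂(n)) is NZ and B_m(n, p̂(n)) is primitive ) tends to 1 as n → ∞. -/

import Mathlib

open Matrix Filter

/-- The 0/1 matrix (over `ℕ`) associated to a Boolean matrix of entries. -/
def toMat {n : ℕ} (b : Fin n → Fin n → Bool) : Matrix (Fin n) (Fin n) ℕ :=
  Matrix.of fun i j => if b i j then 1 else 0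

open Classical in
/-- The probability that the random set `B_m(n, p)` of `m` independent random `n × n`
binary matrices, whose `m · n²` entries are i.i.d. Bernoulli(`p`), satisfies `E`. -/
noncomputable def bernoulliProb (n m : ℕ) (p : ℝ)
    (E : (Fin m → Matrix (Fin n) (Fin n) ℕ) → Prop) : ℝ :=
  ∑ b : Fin m → Fin n → Fin n → Bool,
    if E (fun k => toMat (b k)) then
      ∏ k : Fin m, ∏ i : Fin n, ∏ j : Fin n, (if b k i j then p else 1 - p)
    else 0

/-- A set `{M 0, ..., M (m-1)}` of `n × n` matrices over `ℕ` is primitive if some nonempty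
product of its elements (repetitions allowed) has all entries positive. -/
def IsPrimitive {n m : ℕ} (M : Fin m → Matrix (Fin n) (Fin n) ℕ) : Prop :=
  ∃ w : List (Fin m), w ≠ [] ∧ ∀ i j, 0 < (w.map M).prod i j

/-- A matrix is NZ if every row and every column contains a positive entry. -/
def IsNZ {n : ℕ} (A : Matrix (Fin n) (Fin n) ℕ) : Prop :=
  (∀ i, ∃ j, 0 < A i j) ∧ (∀ j, ∃ i, 0 < A i j)



namespace Stmt5
set_option linter.unusedSectionVars false
set_option linter.unusedVariables false
set_option maxHeartbeats 1600000

open Finset Filter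

section BasicSec
variable {ι : Type*} [Fintype ι] [DecidableEq ι]

def wgt (p : ℝ) : Bool → ℝ := fun x => if x then p else 1 - p

noncomputable def W (p : ℝ) (b : ι → Bool) : ℝ := ∏ i, wgt p (b i)

open Classical in
noncomputable def Pr (p : ℝ) (E : (ι → Bool) → Prop) : ℝ :=
  ∑ b : ι → Bool, if E b then W p b else 0

variable {p : ℝ}

lemma wgt_nonneg (h0 : 0 ≤ p) (h1 : p ≤ 1) (x : Bool) : 0 ≤ wgt p x := by
  cases x <;> simp [wgt] <;> linarith

lemma W_nonneg (h0 : 0 ≤ p) (h1 : p ≤ 1) (b : ι → Bool) : 0 ≤ W p b :=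
  Finset.prod_nonneg fun i _ => wgt_nonneg h0 h1 _

lemma sum_W (p : ℝ) : ∑ b : ι → Bool, W p b = 1 := by
  classical
  have h := Finset.prod_univ_sum (fun _ : ι => (univ : Finset Bool)) (fun _ y => wgt p y)
  rw [Fintype.piFinset_univ] at h
  have h1 : ∑ y : Bool, wgt p y = 1 := by simp [wgt]
  unfold W
  rw [← h]
  calc ∏ _i : ι, ∑ y : Bool, wgt p y = ∏ _i : ι, (1:ℝ) :=
        Finset.prod_congr rfl (fun i _ => h1)
    _ = 1 := Finset.prod_const_one

lemma Pr_nonneg (h0 : 0 ≤ p) (h1 : p ≤ 1) (E : (ι → Bool) → Prop) : 0 ≤ Pr p E := by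
  classical
  unfold Pr
  refine Finset.sum_nonneg fun b _ => ?_
  split_ifs
  · exact W_nonneg h0 h1 b
  · exact le_refl 0

lemma Pr_mono (h0 : 0 ≤ p) (h1 : p ≤ 1) {E F : (ι → Bool) → Prop}
    (h : ∀ b, E b → F b) : Pr p E ≤ Pr p F := by
  classical
  unfold Pr
  refine Finset.sum_le_sum fun b _ => ?_
  split_ifs with hE hF hF
  · exact le_refl _
  · exact absurd (h b hE) hF
  · exact W_nonneg h0 h1 b
  · exact le_refl _

lemma Pr_congr {E F : (ι → Bool) → Prop} (h : ∀ b, E b ↔ F b) : Pr p E = Pr p F := by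
  classical
  unfold Pr
  refine Finset.sum_congr rfl fun b _ => ?_
  split_ifs with hE hF hF
  · rfl
  · exact absurd ((h b).1 hE) hF
  · exact absurd ((h b).2 hF) hE
  · rfl

lemma Pr_true : Pr p (fun _ : ι → Bool => True) = 1 := by
  classical
  unfold Pr
  simpa using sum_W (ι := ι) p

lemma Pr_not (E : (ι → Bool) → Prop) : Pr p (fun b => ¬ E b) = 1 - Pr p E := by
  classical
  have : Pr p (fun b => ¬ E b) + Pr p E = 1 := by
    unfold Pr
    rw [← Finset.sum_add_distrib]
    rw [← sum_W (ι := ι) p]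
    refine Finset.sum_congr rfl fun b _ => ?_
    by_cases h : E b <;> simp [h]
  linarith

lemma Pr_le_one (h0 : 0 ≤ p) (h1 : p ≤ 1) (E : (ι → Bool) → Prop) : Pr p E ≤ 1 := by
  have := Pr_nonneg h0 h1 (fun b : ι → Bool => ¬ E b)
  rw [Pr_not] at this
  linarith

lemma Pr_false : Pr p (fun _ : ι → Bool => False) = 0 := by
  classical
  simp [Pr]

lemma Pr_or_le (h0 : 0 ≤ p) (h1 : p ≤ 1) (E F : (ι → Bool) → Prop) :
    Pr p (fun b => E b ∨ F b) ≤ Pr p E + Pr p F := by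
  classical
  unfold Pr
  rw [← Finset.sum_add_distrib]
  refine Finset.sum_le_sum fun b _ => ?_
  by_cases hE : E b <;> by_cases hF : F b <;>
    simp [hE, hF, W_nonneg h0 h1 b]

lemma Pr_exists_le (h0 : 0 ≤ p) (h1 : p ≤ 1) {κ : Type*} [DecidableEq κ] (s : Finset κ)
    (E : κ → (ι → Bool) → Prop) :
    Pr p (fun b => ∃ a ∈ s, E a b) ≤ ∑ a ∈ s, Pr p (E a) := by
  classical
  induction s using Finset.induction_on with
  | empty =>
    rw [Pr_congr (F := fun _ => False) (by simp)]
    simp [Pr_false]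
  | @insert a s ha ih =>
    have hiff : ∀ b : ι → Bool, (∃ x ∈ insert a s, E x b) ↔ (E a b ∨ ∃ x ∈ s, E x b) := by
      intro b
      constructor
      · rintro ⟨x, hx, hEx⟩
        rcases Finset.mem_insert.1 hx with rfl | hx
        · exact Or.inl hEx
        · exact Or.inr ⟨x, hx, hEx⟩
      · rintro (h | ⟨x, hx, hEx⟩)
        · exact ⟨a, Finset.mem_insert_self _ _, h⟩
        · exact ⟨x, Finset.mem_insert_of_mem hx, hEx⟩
    rw [Pr_congr hiff, Finset.sum_insert ha]
    exact (Pr_or_le h0 h1 _ _).trans (by linarith [ih])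


def DependsOn (S : Finset ι) (E : (ι → Bool) → Prop) : Prop :=
  ∀ b b' : ι → Bool, (∀ i ∈ S, b i = b' i) → (E b ↔ E b')

lemma DependsOn.mono {S T : Finset ι} (hST : S ⊆ T) {E : (ι → Bool) → Prop}
    (h : DependsOn S E) : DependsOn T E :=
  fun b b' hb => h b b' fun i hi => hb i (hST hi)

def restExt (S : Finset ι) (u : {i // i ∈ S} → Bool) (v : {i // ¬ i ∈ S} → Bool) : ι → Bool :=
  fun i => if h : i ∈ S then u ⟨i, h⟩ else v ⟨i, h⟩

lemma restExt_mem {S : Finset ι} (u : {i // i ∈ S} → Bool) (v : {i // ¬ i ∈ S} → Bool)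
    (i : {i // i ∈ S}) : restExt S u v i = u i := by
  simp [restExt, i.2]

lemma restExt_not_mem {S : Finset ι} (u : {i // i ∈ S} → Bool) (v : {i // ¬ i ∈ S} → Bool)
    (i : {i // ¬ i ∈ S}) : restExt S u v i = v i := by
  simp [restExt, i.2]

lemma sum_split (S : Finset ι) (g : (ι → Bool) → ℝ) :
    ∑ b : ι → Bool, g b
      = ∑ u : {i // i ∈ S} → Bool, ∑ v : {i // ¬ i ∈ S} → Bool, g (restExt S u v) := by
  classical
  have := Equiv.sum_comp (Equiv.piEquivPiSubtypeProd (fun i => i ∈ S) (fun _ => Bool)).symm g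
  rw [← this, Fintype.sum_prod_type]
  rfl

lemma W_restExt (S : Finset ι) (u : {i // i ∈ S} → Bool) (v : {i // ¬ i ∈ S} → Bool) :
    W p (restExt S u v) = (∏ i, wgt p (u i)) * (∏ i, wgt p (v i)) := by
  classical
  unfold W
  rw [← Finset.prod_mul_prod_compl S]
  congr 1
  · rw [Finset.prod_subtype S (fun x => Iff.rfl) (fun i => wgt p (restExt S u v i))]
    exact Finset.prod_congr rfl fun i _ => by rw [restExt_mem]
  · rw [Finset.prod_subtype Sᶜ (fun x => Finset.mem_compl) (fun i => wgt p (restExt S u v i))]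
    exact Finset.prod_congr rfl fun i _ => by rw [restExt_not_mem]

open Classical in
lemma Pr_split (S : Finset ι) (E : (ι → Bool) → Prop) :
    Pr p E = ∑ u : {i // i ∈ S} → Bool, ∑ v : {i // ¬ i ∈ S} → Bool,
      (if E (restExt S u v) then (∏ i, wgt p (u i)) * (∏ i, wgt p (v i)) else 0) := by
  classical
  unfold Pr
  rw [sum_split S]
  refine Finset.sum_congr rfl fun u _ => Finset.sum_congr rfl fun v _ => ?_
  rw [W_restExt]

lemma Pr_and_of_dependsOn {S : Finset ι} {E F : (ι → Bool) → Prop}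
    (hE : DependsOn S E) (hF : DependsOn Sᶜ F) :
    Pr p (fun b => E b ∧ F b) = Pr p E * Pr p F := by
  classical
  set E' : ({i // i ∈ S} → Bool) → Prop := fun u => E (restExt S u (fun _ => false)) with hE'
  set F' : ({i // ¬ i ∈ S} → Bool) → Prop := fun v => F (restExt S (fun _ => false) v) with hF'
  have hEuv : ∀ u v, E (restExt S u v) = E' u := by
    intro u v
    exact propext (hE _ _ (fun i hi => by rw [restExt_mem _ _ ⟨i, hi⟩, restExt_mem _ _ ⟨i, hi⟩]))
  have hFuv : ∀ u v, F (restExt S u v) = F' v := by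
    intro u v
    refine propext (hF _ _ (fun i hi => ?_))
    have hi' : ¬ i ∈ S := Finset.mem_compl.1 hi
    rw [restExt_not_mem _ _ ⟨i, hi'⟩, restExt_not_mem _ _ ⟨i, hi'⟩]
  set A := ∑ u : {i // i ∈ S} → Bool, (if E' u then (∏ i, wgt p (u i)) else 0) with hA
  set B := ∑ v : {i // ¬ i ∈ S} → Bool, (if F' v then (∏ i, wgt p (v i)) else 0) with hB
  have h1 : Pr p (fun b => E b ∧ F b) = A * B := by
    rw [Pr_split S, Finset.sum_mul_sum]
    refine Finset.sum_congr rfl fun u _ => Finset.sum_congr rfl fun v _ => ?_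
    simp only [hEuv, hFuv]
    by_cases h1 : E' u <;> by_cases h2 : F' v <;> simp [h1, h2]
  have h2 : Pr p E = A := by
    rw [Pr_split S E]
    simp only [hEuv]
    have h4 : ∀ u : {i // i ∈ S} → Bool,
        (∑ v : {i // ¬ i ∈ S} → Bool,
          if E' u then (∏ i, wgt p (u i)) * (∏ i, wgt p (v i)) else 0)
        = (if E' u then (∏ i, wgt p (u i)) else 0) := by
      intro u
      by_cases h : E' u
      · simp only [h, if_true]
        rw [← Finset.mul_sum]
        have h5 := sum_W (ι := {i // ¬ i ∈ S}) p
        unfold W at h5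
        rw [h5, mul_one]
      · simp [h]
    rw [Finset.sum_congr rfl fun u _ => h4 u]
  have h3 : Pr p F = B := by
    rw [Pr_split S F]
    rw [Finset.sum_comm]
    simp only [hFuv]
    have h4 : ∀ v : {i // ¬ i ∈ S} → Bool,
        (∑ u : {i // i ∈ S} → Bool,
          if F' v then (∏ i, wgt p (u i)) * (∏ i, wgt p (v i)) else 0)
        = (if F' v then (∏ i, wgt p (v i)) else 0) := by
      intro v
      by_cases h : F' v
      · simp only [h, if_true]
        rw [← Finset.sum_mul]
        have h5 := sum_W (ι := {i // i ∈ S}) p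
        unfold W at h5
        rw [h5, one_mul]
      · simp [h]
    rw [Finset.sum_congr rfl fun v _ => h4 v]
  rw [h1, h2, h3]

lemma dependsOn_forall {κ : Type*} [DecidableEq κ] (s : Finset κ) (S : κ → Finset ι)
    (E : κ → (ι → Bool) → Prop) (hdep : ∀ a ∈ s, DependsOn (S a) (E a)) :
    DependsOn (s.biUnion S) (fun b => ∀ a ∈ s, E a b) := by
  intro b b' hb
  constructor
  · intro h a ha
    exact (hdep a ha b b' fun i hi => hb i (Finset.mem_biUnion.2 ⟨a, ha, hi⟩)).1 (h a ha)
  · intro h a ha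
    exact (hdep a ha b b' fun i hi => hb i (Finset.mem_biUnion.2 ⟨a, ha, hi⟩)).2 (h a ha)

lemma Pr_forall_of_dependsOn {κ : Type*} [DecidableEq κ] (s : Finset κ)
    (S : κ → Finset ι) (hdisj : (s : Set κ).PairwiseDisjoint S)
    (E : κ → (ι → Bool) → Prop) (hdep : ∀ a ∈ s, DependsOn (S a) (E a)) :
    Pr p (fun b => ∀ a ∈ s, E a b) = ∏ a ∈ s, Pr p (E a) := by
  classical
  induction s using Finset.induction_on with
  | empty => rw [Pr_congr (F := fun _ => True) (by simp), Pr_true]; simp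
  | @insert a s ha ih =>
    have hsub : s.biUnion S ⊆ (S a)ᶜ := by
      intro i hi
      rcases Finset.mem_biUnion.1 hi with ⟨x, hx, hix⟩
      rw [Finset.mem_compl]
      intro hia
      have hxa : x ≠ a := fun h => ha (h ▸ hx)
      have := hdisj (Finset.mem_insert_of_mem hx) (Finset.mem_insert_self a s) hxa
      exact Finset.disjoint_left.1 this hix hia
    have hdepRest : DependsOn (S a)ᶜ (fun b => ∀ x ∈ s, E x b) :=
      fun b b' hb => (dependsOn_forall s S E (fun x hx => hdep x (Finset.mem_insert_of_mem hx)))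
        b b' (fun i hi => hb i (hsub hi))
    have step : Pr p (fun b => ∀ x ∈ insert a s, E x b)
        = Pr p (E a) * Pr p (fun b => ∀ x ∈ s, E x b) := by
      rw [← Pr_and_of_dependsOn (hdep a (Finset.mem_insert_self a s)) hdepRest]
      exact Pr_congr (by intro b; simp [Finset.forall_mem_insert])
    rw [step, Finset.prod_insert ha,
      ih (hdisj.subset (by intro x hx; exact Finset.mem_insert_of_mem hx))
        (fun x hx => hdep x (Finset.mem_insert_of_mem hx))]

lemma Pr_forall_false (S : Finset ι) :
    Pr p (fun b => ∀ i ∈ S, b i = false) = (1 - p) ^ S.card := by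
  classical
  rw [Pr_split S]
  have hcond : ∀ (u : {i // i ∈ S} → Bool) v,
      (∀ i ∈ S, restExt S u v i = false) = (u = fun _ => false) := by
    intro u v
    refine propext ⟨fun h => funext fun j => ?_, fun h i hi => ?_⟩
    · rw [← restExt_mem u v j]; exact h j j.2
    · rw [restExt_mem u v ⟨i, hi⟩, h]
  simp only [hcond]
  have h4 : ∀ u : {i // i ∈ S} → Bool,
      (∑ v : {i // ¬ i ∈ S} → Bool,
        if (u = fun _ => false) then (∏ i, wgt p (u i)) * (∏ i, wgt p (v i)) else 0)
      = if (u = fun _ => false) then (∏ i, wgt p (u i)) else 0 := by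
    intro u
    by_cases h : u = fun _ => false
    · simp only [h, if_true]
      rw [← Finset.mul_sum]
      have h5 := sum_W (ι := {i // ¬ i ∈ S}) p
      unfold W at h5
      rw [h5, mul_one]
    · simp [h]
  rw [Finset.sum_congr rfl fun u _ => h4 u]
  rw [Finset.sum_ite_eq' univ (fun _ => false) (fun u => ∏ i, wgt p (u i))]
  simp only [Finset.mem_univ, if_true]
  have : ∀ i : {i // i ∈ S}, wgt p false = 1 - p := fun _ => by simp [wgt]
  rw [Finset.prod_const]
  simp [wgt, Fintype.card_coe]

lemma Pr_exists_true (S : Finset ι) :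
    Pr p (fun b => ∃ i ∈ S, b i = true) = 1 - (1 - p) ^ S.card := by
  have h := Pr_not (ι := ι) (p := p) (fun b => ∀ i ∈ S, b i = false)
  rw [Pr_forall_false] at h
  have h2 : Pr p (fun b : ι → Bool => ¬ ∀ i ∈ S, b i = false)
      = Pr p (fun b : ι → Bool => ∃ i ∈ S, b i = true) := by
    refine Pr_congr fun b => ?_
    simp [Bool.not_eq_false]
  rw [h2] at h
  linarith [h]

def UpSet (E : (ι → Bool) → Prop) : Prop := ∀ b b' : ι → Bool, b ≤ b' → E b → E b'

lemma harris (h0 : 0 ≤ p) (h1 : p ≤ 1) {E F : (ι → Bool) → Prop}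
    (hE : UpSet E) (hF : UpSet F) :
    Pr p E * Pr p F ≤ Pr p (fun b => E b ∧ F b) := by
  classical
  have key := fkg (α := ι → Bool) (β := ℝ)
    (fun b => if E b then (1:ℝ) else 0) (fun b => if F b then (1:ℝ) else 0) (W p)
    (fun b => W_nonneg h0 h1 b)
    (fun b => by positivity)
    (fun b => by positivity)
    (by
      intro a b hab
      by_cases h : E a
      · simp [h, hE a b hab h]
      · by_cases h' : E b <;> simp [h, h'])
    (by
      intro a b hab
      by_cases h : F a
      · simp [h, hF a b hab h]
      · by_cases h' : F b <;> simp [h, h'])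
    (by
      intro a b
      have : W p a * W p b = W p (a ⊓ b) * W p (a ⊔ b) := by
        unfold W
        rw [← Finset.prod_mul_distrib, ← Finset.prod_mul_distrib]
        refine Finset.prod_congr rfl fun i _ => ?_
        rw [Pi.inf_apply, Pi.sup_apply]
        rcases le_total (a i) (b i) with h | h
        · rw [inf_eq_left.2 h, sup_eq_right.2 h]
        · rw [inf_eq_right.2 h, sup_eq_left.2 h]; ring
      exact le_of_eq this)
  have e1 : ∀ (G : (ι → Bool) → Prop), (∑ b : ι → Bool, W p b * (if G b then (1:ℝ) else 0)) = Pr p G := by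
    intro G
    unfold Pr
    refine Finset.sum_congr rfl fun b _ => ?_
    by_cases h : G b <;> simp [h]
  have e2 : (∑ b : ι → Bool, W p b *
      ((if E b then (1:ℝ) else 0) * (if F b then (1:ℝ) else 0)))
      = Pr p (fun b => E b ∧ F b) := by
    unfold Pr
    refine Finset.sum_congr rfl fun b _ => ?_
    by_cases h : E b <;> by_cases h' : F b <;> simp [h, h']
  rw [e1 E, e1 F, e2, sum_W] at key
  simpa using key

lemma prod_Pr_le (h0 : 0 ≤ p) (h1 : p ≤ 1) {κ : Type*} [DecidableEq κ] (s : Finset κ)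
    (E : κ → (ι → Bool) → Prop) (hup : ∀ a ∈ s, UpSet (E a)) :
    ∏ a ∈ s, Pr p (E a) ≤ Pr p (fun b => ∀ a ∈ s, E a b) := by
  classical
  induction s using Finset.induction_on with
  | empty => rw [Pr_congr (F := fun _ => True) (by simp), Pr_true]; simp
  | @insert a s ha ih =>
    have hupRest : UpSet (fun b => ∀ x ∈ s, E x b) := by
      intro b b' hb h x hx
      exact hup x (Finset.mem_insert_of_mem hx) b b' hb (h x hx)
    have h2 : ∏ x ∈ insert a s, Pr p (E x) ≤ Pr p (E a) * Pr p (fun b => ∀ x ∈ s, E x b) := by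
      rw [Finset.prod_insert ha]
      refine mul_le_mul_of_nonneg_left (ih (fun x hx => hup x (Finset.mem_insert_of_mem hx)))
        (Pr_nonneg h0 h1 _)
    refine h2.trans ?_
    refine (harris h0 h1 (hup a (Finset.mem_insert_self a s)) hupRest).trans (le_of_eq ?_)
    exact Pr_congr (by intro b; simp [Finset.forall_mem_insert])

lemma dependsOn_forall_false (T : Finset ι) :
    DependsOn T (fun b => ∀ i ∈ T, b i = false) := by
  intro b b' hb
  constructor
  · intro h i hi; rw [← hb i hi]; exact h i hi
  · intro h i hi; rw [hb i hi]; exact h i hi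

lemma dependsOn_exists_true (S : Finset ι) :
    DependsOn S (fun b => ∃ i ∈ S, b i = true) := by
  intro b b' hb
  constructor
  · rintro ⟨i, hi, h⟩; exact ⟨i, hi, by rw [← hb i hi]; exact h⟩
  · rintro ⟨i, hi, h⟩; exact ⟨i, hi, by rw [hb i hi]; exact h⟩

lemma Pr_block_event (T : Finset ι) {κ : Type*} [DecidableEq κ] (s : Finset κ)
    (S : κ → Finset ι) (hdisj : (s : Set κ).PairwiseDisjoint S)
    (hT : ∀ a ∈ s, Disjoint (S a) T) :
    Pr p (fun b => (∀ i ∈ T, b i = false) ∧ (∀ a ∈ s, ∃ i ∈ S a, b i = true))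
      = (1-p)^T.card * ∏ a ∈ s, (1 - (1-p)^(S a).card) := by
  classical
  have hdep2 : DependsOn Tᶜ (fun b => ∀ a ∈ s, ∃ i ∈ S a, b i = true) := by
    refine DependsOn.mono ?_ (dependsOn_forall s S _ (fun a _ => dependsOn_exists_true (S a)))
    intro i hi
    rcases Finset.mem_biUnion.1 hi with ⟨a, ha, hia⟩
    rw [Finset.mem_compl]
    exact fun hiT => Finset.disjoint_left.1 (hT a ha) hia hiT
  rw [Pr_and_of_dependsOn (dependsOn_forall_false T) hdep2, Pr_forall_false,
    Pr_forall_of_dependsOn s S hdisj _ (fun a _ => dependsOn_exists_true (S a))]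
  congr 1
  exact Finset.prod_congr rfl fun a _ => Pr_exists_true (S a)

end BasicSec

section GraphSec
variable {n : ℕ} {g : Fin n → Fin n → Bool}

def PathN (g : Fin n → Fin n → Bool) : ℕ → Fin n → Fin n → Prop
  | 0, i, j => i = j
  | (s+1), i, j => ∃ l, g i l = true ∧ PathN g s l j

lemma pathN_trans : ∀ {s t : ℕ} {i v j : Fin n},
    PathN g s i v → PathN g t v j → PathN g (s + t) i j := by
  intro s
  induction s with
  | zero =>
    intro t i v j h1 h2
    cases h1
    rw [Nat.zero_add]
    exact h2
  | succ s ih =>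
    intro t i v j h1 h2
    obtain ⟨l, hl, hp⟩ := h1
    rw [Nat.succ_add]
    exact ⟨l, hl, ih hp h2⟩

lemma pathN_loop {v : Fin n} (h : g v v = true) : ∀ t, PathN g t v v := by
  intro t
  induction t with
  | zero => rfl
  | succ t ih => exact ⟨v, h, ih⟩

lemma pathN_pos {s : ℕ} {i j : Fin n} (h : PathN g s i j) :
    0 < ((toMat g) ^ s) i j := by
  induction s generalizing i with
  | zero =>
    cases h
    simp [pow_zero, Matrix.one_apply_eq]
  | succ s ih =>
    obtain ⟨l, hl, hp⟩ := h
    rw [pow_succ']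
    rw [Matrix.mul_apply]
    refine Finset.sum_pos' (fun x _ => Nat.zero_le _) ⟨l, Finset.mem_univ l, ?_⟩
    have h1 : toMat g i l = 1 := by simp [toMat, hl]
    have h2 := ih hp
    positivity

/-- From NZ rows/cols and absence of "bad cuts", every vertex reaches every other within n steps. -/
lemma reach_of_no_cut
    (hrow : ∀ i, ∃ j, g i j = true) (hcol : ∀ j, ∃ i, g i j = true)
    (hcutOut : ∀ A : Finset (Fin n), A.Nonempty → 2 * A.card ≤ n →
      ¬((∀ v ∈ A, ∀ u ∈ Aᶜ, g v u = false) ∧ (∀ v ∈ A, ∃ u ∈ A, g v u = true)))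
    (hcutIn : ∀ A : Finset (Fin n), A.Nonempty → 2 * A.card ≤ n →
      ¬((∀ u ∈ A, ∀ v ∈ Aᶜ, g v u = false) ∧ (∀ u ∈ A, ∃ v ∈ A, g v u = true)))
    (i j : Fin n) : ∃ a ≤ n, PathN g a i j := by
  classical
  set A : ℕ → Finset (Fin n) := fun k => univ.filter (fun j => ∃ a ≤ k, PathN g a i j) with hA
  have hmono : ∀ k, A k ⊆ A (k+1) := by
    intro k x hx
    rw [hA, Finset.mem_filter] at hx ⊢
    obtain ⟨_, a, ha, hp⟩ := hx
    exact ⟨Finset.mem_univ _, a, Nat.le_succ_of_le ha, hp⟩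
  have hclosed : ∀ k, A k = A (k+1) → ∀ v ∈ A k, ∀ u, g v u = true → u ∈ A k := by
    intro k heq v hv u hgu
    rw [hA, Finset.mem_filter] at hv
    obtain ⟨_, a, ha, hp⟩ := hv
    have hpu : PathN g (a+1) i u := pathN_trans hp ⟨u, hgu, rfl⟩
    have : u ∈ A (k+1) := by
      rw [hA, Finset.mem_filter]
      exact ⟨Finset.mem_univ _, a+1, Nat.succ_le_succ ha, hpu⟩
    rwa [← heq] at this
  have hcontra : ∀ k, A k = A (k+1) → A k ≠ univ → False := by
    intro k heq hne
    have hnonempty : (A k).Nonempty := by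
      refine ⟨i, ?_⟩
      rw [hA, Finset.mem_filter]
      exact ⟨Finset.mem_univ _, 0, Nat.zero_le _, rfl⟩
    by_cases hcard : 2 * (A k).card ≤ n
    · refine hcutOut (A k) hnonempty hcard ⟨?_, ?_⟩
      · intro v hv u hu
        by_contra hne'
        have : g v u = true := by
          cases h : g v u
          · exact absurd h hne'
          · rfl
        exact (Finset.mem_compl.1 hu) (hclosed k heq v hv u this)
      · intro v hv
        obtain ⟨u, hu⟩ := hrow v
        exact ⟨u, hclosed k heq v hv u hu, hu⟩
    · have hBne : ((A k)ᶜ : Finset (Fin n)).Nonempty := by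
        rw [← Finset.card_pos, Finset.card_compl]
        have := Finset.card_le_univ (A k)
        simp only [Fintype.card_fin] at *
        have hlt : (A k).card < n := by
          rcases Nat.lt_or_ge (A k).card n with h | h
          · exact h
          · exact absurd (Finset.eq_univ_of_card _ (by rw [Fintype.card_fin]; omega)) hne
        omega
      have hBcard : 2 * ((A k)ᶜ : Finset (Fin n)).card ≤ n := by
        rw [Finset.card_compl]
        simp only [Fintype.card_fin]
        omega
      refine hcutIn ((A k)ᶜ) hBne hBcard ⟨?_, ?_⟩
      · intro u hu v hv
        rw [compl_compl] at hv
        by_contra hne'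
        have hgt : g v u = true := by
          cases h : g v u
          · exact absurd h hne'
          · rfl
        exact (Finset.mem_compl.1 hu) (hclosed k heq v hv u hgt)
      · intro u hu
        obtain ⟨v, hv⟩ := hcol u
        refine ⟨v, ?_, hv⟩
        rw [Finset.mem_compl]
        intro hvA
        exact (Finset.mem_compl.1 hu) (hclosed k heq v hvA u hv)
  have hclaim : ∀ k, A k = univ ∨ k + 1 ≤ (A k).card := by
    intro k
    induction k with
    | zero =>
      right
      rw [Nat.le_iff_lt_or_eq]
      have : i ∈ A 0 := by
        rw [hA, Finset.mem_filter]
        exact ⟨Finset.mem_univ _, 0, le_refl _, rfl⟩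
      have := Finset.card_pos.2 ⟨i, this⟩
      omega
    | succ k ih =>
      rcases ih with h | h
      · left
        exact Finset.eq_univ_of_forall fun x => hmono k (h ▸ Finset.mem_univ x)
      · by_cases hU : A (k+1) = univ
        · exact Or.inl hU
        · right
          by_cases heq : A k = A (k+1)
          · exact absurd heq (fun h' => hcontra k h' (fun hAu => hU (heq ▸ hAu)))
          · have hss : A k ⊂ A (k+1) := Finset.ssubset_iff_subset_ne.2 ⟨hmono k, heq⟩
            have := Finset.card_lt_card hss
            omega
  have hfin : A n = univ := by
    rcases hclaim n with h | h
    · exact h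
    · refine Finset.eq_univ_of_card _ (le_antisymm (by simpa using Finset.card_le_univ (A n)) ?_)
      simp only [Fintype.card_fin]
      omega
  have : j ∈ A n := hfin ▸ Finset.mem_univ j
  rw [hA, Finset.mem_filter] at this
  exact this.2

lemma pathN_all (hn : 1 ≤ n)
    (hrow : ∀ i, ∃ j, g i j = true) (hcol : ∀ j, ∃ i, g i j = true)
    (hcutOut : ∀ A : Finset (Fin n), A.Nonempty → 2 * A.card ≤ n →
      ¬((∀ v ∈ A, ∀ u ∈ Aᶜ, g v u = false) ∧ (∀ v ∈ A, ∃ u ∈ A, g v u = true)))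
    (hcutIn : ∀ A : Finset (Fin n), A.Nonempty → 2 * A.card ≤ n →
      ¬((∀ u ∈ A, ∀ v ∈ Aᶜ, g v u = false) ∧ (∀ u ∈ A, ∃ v ∈ A, g v u = true)))
    (hloop : ∃ v, g v v = true) :
    ∀ i j, PathN g (2 * n) i j := by
  obtain ⟨v, hv⟩ := hloop
  intro i j
  obtain ⟨a, ha, pa⟩ := reach_of_no_cut hrow hcol hcutOut hcutIn i v
  obtain ⟨e, he, pe⟩ := reach_of_no_cut hrow hcol hcutOut hcutIn v j
  have hp := pathN_trans pa (pathN_trans (pathN_loop hv (2 * n - a - e)) pe)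
  have harith : a + (2 * n - a - e + e) = 2 * n := by omega
  rwa [harith] at hp



end GraphSec

lemma pow_self_le_exp_mul_factorial : ∀ k : ℕ, (k:ℝ)^k ≤ Real.exp 1 ^ k * (k.factorial : ℝ) := by
  intro k
  induction k with
  | zero => simp
  | succ k ih =>
    have hstep : ((k:ℝ)+1)^k ≤ Real.exp 1 * (k:ℝ)^k := by
      rcases Nat.eq_zero_or_pos k with rfl | hk
      · have he : (1:ℝ) ≤ Real.exp 1 := by nlinarith [Real.add_one_le_exp (1:ℝ)]
        norm_num
      · have hkpos : (0:ℝ) < k := by exact_mod_cast hk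
        have h1 : ((k:ℝ)+1)^k = (k:ℝ)^k * (1 + 1/(k:ℝ))^k := by
          rw [← mul_pow]
          congr 1
          field_simp
        have h2 : (1 + 1/(k:ℝ))^k ≤ Real.exp 1 := by
          have h3 : (1 + 1/(k:ℝ)) ≤ Real.exp (1/(k:ℝ)) := by
            have := Real.add_one_le_exp (1/(k:ℝ))
            linarith
          have h4 : (1 + 1/(k:ℝ))^k ≤ Real.exp (1/(k:ℝ)) ^ k := by
            apply pow_le_pow_left₀ (by positivity) h3
          refine h4.trans (le_of_eq ?_)
          rw [← Real.exp_nat_mul]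
          congr 1
          field_simp
        calc ((k:ℝ)+1)^k = (k:ℝ)^k * (1 + 1/(k:ℝ))^k := h1
          _ ≤ (k:ℝ)^k * Real.exp 1 := by
              apply mul_le_mul_of_nonneg_left h2 (by positivity)
          _ = Real.exp 1 * (k:ℝ)^k := by ring
    have hkn : ((k+1 : ℕ):ℝ) = (k:ℝ)+1 := by push_cast; ring
    calc ((k+1:ℕ):ℝ)^(k+1) = ((k:ℝ)+1) * ((k:ℝ)+1)^k := by rw [hkn]; ring
      _ ≤ ((k:ℝ)+1) * (Real.exp 1 * (k:ℝ)^k) := by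
          apply mul_le_mul_of_nonneg_left hstep (by positivity)
      _ ≤ ((k:ℝ)+1) * (Real.exp 1 * (Real.exp 1 ^ k * k.factorial)) := by
          have := mul_le_mul_of_nonneg_left ih (Real.exp_pos 1).le
          apply mul_le_mul_of_nonneg_left this (by positivity)
      _ = Real.exp 1 ^ (k+1) * (((k:ℝ)+1) * k.factorial) := by ring
      _ = Real.exp 1 ^ (k+1) * ((k+1).factorial : ℝ) := by
          rw [Nat.factorial_succ]
          push_cast
          ring

lemma one_sub_le_exp_neg (x : ℝ) : 1 - x ≤ Real.exp (-x) := by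
  have := Real.add_one_le_exp (-x)
  linarith

lemma exp_neg_two_le_one_sub {x : ℝ} (h0 : 0 ≤ x) (h1 : x ≤ 1/2) :
    Real.exp (-(2*x)) ≤ 1 - x := by
  have h2 : (1:ℝ) + 2*x ≤ Real.exp (2*x) := by
    have := Real.add_one_le_exp (2*x)
    linarith
  have h3 : Real.exp (-(2*x)) = 1 / Real.exp (2*x) := by
    rw [Real.exp_neg]; ring
  rw [h3]
  have h4 : (0:ℝ) < 1 + 2*x := by linarith
  have h5 : 1 / Real.exp (2*x) ≤ 1 / (1 + 2*x) := by
    apply one_div_le_one_div_of_le h4 h2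
  refine h5.trans ?_
  rw [div_le_iff₀ h4]
  nlinarith

lemma pow_one_sub_le_exp {p : ℝ} (h1 : p ≤ 1) (t : ℕ) :
    (1-p)^t ≤ Real.exp (-(p * t)) := by
  have h2 : (1-p)^t ≤ Real.exp (-p)^t :=
    pow_le_pow_left₀ (by linarith) (one_sub_le_exp_neg p) t
  refine h2.trans (le_of_eq ?_)
  rw [← Real.exp_nat_mul]
  congr 1
  ring

lemma geom_tail_le {β : ℝ} (h0 : 0 ≤ β) (h1 : β ≤ 1/2) (h : ℕ) :
    ∑ k ∈ Icc 1 h, β^k ≤ 2*β := by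
  have key : ∀ h : ℕ, ∑ k ∈ Icc 1 h, β^k ≤ 2*β*(1 - β^h) := by
    intro h
    induction h with
    | zero => simp
    | succ h ih =>
      rw [Finset.sum_Icc_succ_top (by omega), pow_succ]
      have hbn : (0:ℝ) ≤ β^h := by positivity
      have hkey : 0 ≤ β^h * β * (1 - 2*β) :=
        mul_nonneg (mul_nonneg hbn h0) (by linarith)
      nlinarith [ih, hkey]
  refine (key h).trans ?_
  nlinarith [mul_nonneg h0 (pow_nonneg h0 h)]

lemma bernoulli_bound {p : ℝ} (h0 : 0 ≤ p) (h1 : p ≤ 1) (k : ℕ) :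
    1 - (1-p)^k ≤ k * p := by
  have h2 : (1:ℝ) + (k:ℝ) * (-p) ≤ (1 + (-p))^k := one_add_mul_le_pow (by linarith) k
  have h3 : (1:ℝ) + (-p) = 1 - p := by ring
  rw [h3] at h2
  linarith

lemma choose_mul_bound (n k : ℕ) : (n.choose k : ℝ) * (k:ℝ)^k ≤ ((n:ℝ) * Real.exp 1)^k := by
  have h1 : (n.choose k : ℝ) ≤ (n:ℝ)^k / (k.factorial : ℝ) := Nat.choose_le_pow_div k n
  have h2 := pow_self_le_exp_mul_factorial k
  have hf : (0:ℝ) < (k.factorial : ℝ) := by exact_mod_cast k.factorial_pos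
  have h3 : (n.choose k : ℝ) * (k:ℝ)^k ≤ ((n:ℝ)^k / (k.factorial : ℝ)) * (Real.exp 1 ^ k * k.factorial) := by
    apply mul_le_mul h1 h2 (by positivity) (by positivity)
  refine h3.trans (le_of_eq ?_)
  rw [mul_pow]
  field_simp


section EventsSec
variable {m n : ℕ} {p : ℝ}

def SrowSub (k : Fin m) (v : Fin n) (A : Finset (Fin n)) : Finset (Fin m × Fin n × Fin n) :=
  A.image fun u => (k, v, u)
def ScolSub (k : Fin m) (u : Fin n) (A : Finset (Fin n)) : Finset (Fin m × Fin n × Fin n) :=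
  A.image fun v => (k, v, u)
def Sdiag (k : Fin m) : Finset (Fin m × Fin n × Fin n) :=
  univ.image fun i : Fin n => (k, i, i)
def SblockOut (k : Fin m) (A : Finset (Fin n)) : Finset (Fin m × Fin n × Fin n) :=
  (A ×ˢ Aᶜ).image fun q => (k, q.1, q.2)
def SblockIn (k : Fin m) (A : Finset (Fin n)) : Finset (Fin m × Fin n × Fin n) :=
  (Aᶜ ×ˢ A).image fun q => (k, q.1, q.2)

lemma mem_SrowSub {k : Fin m} {v : Fin n} {A : Finset (Fin n)} {x} :
    x ∈ SrowSub k v A ↔ ∃ u ∈ A, x = (k, v, u) := by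
  constructor
  · intro hx; rcases Finset.mem_image.1 hx with ⟨u, hu, rfl⟩; exact ⟨u, hu, rfl⟩
  · rintro ⟨u, hu, rfl⟩; exact Finset.mem_image.2 ⟨u, hu, rfl⟩
lemma mem_ScolSub {k : Fin m} {u : Fin n} {A : Finset (Fin n)} {x} :
    x ∈ ScolSub k u A ↔ ∃ v ∈ A, x = (k, v, u) := by
  constructor
  · intro hx; rcases Finset.mem_image.1 hx with ⟨v, hv, rfl⟩; exact ⟨v, hv, rfl⟩
  · rintro ⟨v, hv, rfl⟩; exact Finset.mem_image.2 ⟨v, hv, rfl⟩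
lemma mem_SblockOut {k : Fin m} {A : Finset (Fin n)} {x} :
    x ∈ SblockOut k A ↔ ∃ v ∈ A, ∃ u ∈ Aᶜ, x = (k, v, u) := by
  constructor
  · intro hx
    rcases Finset.mem_image.1 hx with ⟨q, hq, rfl⟩
    rcases Finset.mem_product.1 hq with ⟨h1, h2⟩
    exact ⟨q.1, h1, q.2, h2, rfl⟩
  · rintro ⟨v, hv, u, hu, rfl⟩
    exact Finset.mem_image.2 ⟨(v,u), Finset.mem_product.2 ⟨hv, hu⟩, rfl⟩
lemma mem_SblockIn {k : Fin m} {A : Finset (Fin n)} {x} :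
    x ∈ SblockIn k A ↔ ∃ v ∈ Aᶜ, ∃ u ∈ A, x = (k, v, u) := by
  constructor
  · intro hx
    rcases Finset.mem_image.1 hx with ⟨q, hq, rfl⟩
    rcases Finset.mem_product.1 hq with ⟨h1, h2⟩
    exact ⟨q.1, h1, q.2, h2, rfl⟩
  · rintro ⟨v, hv, u, hu, rfl⟩
    exact Finset.mem_image.2 ⟨(v,u), Finset.mem_product.2 ⟨hv, hu⟩, rfl⟩

lemma card_SrowSub (k : Fin m) (v : Fin n) (A : Finset (Fin n)) :
    (SrowSub k v A).card = A.card :=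
  Finset.card_image_of_injective _ (fun a b h => by simpa using h)
lemma card_ScolSub (k : Fin m) (u : Fin n) (A : Finset (Fin n)) :
    (ScolSub k u A).card = A.card :=
  Finset.card_image_of_injective _ (fun a b h => by simpa using h)
lemma card_Sdiag (k : Fin m) : (Sdiag (n := n) k).card = n := by
  rw [Sdiag, Finset.card_image_of_injective _ (fun a b h => by
    have := congrArg (fun t : Fin m × Fin n × Fin n => t.2.1) h
    simpa using this)]
  simp
lemma card_SblockOut (k : Fin m) (A : Finset (Fin n)) :
    (SblockOut k A).card = A.card * Aᶜ.card := by
  rw [SblockOut, Finset.card_image_of_injective _ (fun a b h => by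
    have h1 := congrArg (fun t : Fin m × Fin n × Fin n => t.2.1) h
    have h2 := congrArg (fun t : Fin m × Fin n × Fin n => t.2.2) h
    simp at h1 h2
    exact Prod.ext h1 h2), Finset.card_product]
lemma card_SblockIn (k : Fin m) (A : Finset (Fin n)) :
    (SblockIn k A).card = Aᶜ.card * A.card := by
  rw [SblockIn, Finset.card_image_of_injective _ (fun a b h => by
    have h1 := congrArg (fun t : Fin m × Fin n × Fin n => t.2.1) h
    have h2 := congrArg (fun t : Fin m × Fin n × Fin n => t.2.2) h
    simp at h1 h2
    exact Prod.ext h1 h2), Finset.card_product]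

/-- The bad out-cut event for the matrix k at vertex set A. -/
def BadOutEv (k : Fin m) (A : Finset (Fin n)) (b : (Fin m × Fin n × Fin n) → Bool) : Prop :=
  (∀ s ∈ SblockOut k A, b s = false) ∧ (∀ v ∈ A, ∃ s ∈ SrowSub k v A, b s = true)

def BadInEv (k : Fin m) (A : Finset (Fin n)) (b : (Fin m × Fin n × Fin n) → Bool) : Prop :=
  (∀ s ∈ SblockIn k A, b s = false) ∧ (∀ u ∈ A, ∃ s ∈ ScolSub k u A, b s = true)

lemma Pr_BadOutEv (k : Fin m) (A : Finset (Fin n)) :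
    Pr p (BadOutEv k A) = (1-p)^(A.card * Aᶜ.card) * (1 - (1-p)^A.card)^A.card := by
  classical
  have h := Pr_block_event (p := p) (SblockOut k A) A (fun v => SrowSub k v A)
    (by
      intro v hv v' hv' hne
      simp only [Function.onFun]
      rw [Finset.disjoint_left]
      intro x hx hx'
      rcases mem_SrowSub.1 hx with ⟨u, _, rfl⟩
      rcases mem_SrowSub.1 hx' with ⟨u', _, h'⟩
      have hvv := congrArg (fun t : Fin m × Fin n × Fin n => t.2.1) h'
      simp at hvv
      exact hne hvv)
    (by
      intro v hv
      rw [Finset.disjoint_left]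
      intro x hx hx'
      rcases mem_SrowSub.1 hx with ⟨u, hu, rfl⟩
      rcases mem_SblockOut.1 hx' with ⟨v', _, u', hu', h'⟩
      have huu : u = u' := by
        have := congrArg (fun t : Fin m × Fin n × Fin n => t.2.2) h'
        simpa using this
      exact (Finset.mem_compl.1 (huu ▸ hu')) hu)
  unfold BadOutEv
  rw [h, card_SblockOut]
  congr 1
  rw [Finset.prod_congr rfl fun v hv => by rw [card_SrowSub]]
  rw [Finset.prod_const]

lemma Pr_BadInEv (k : Fin m) (A : Finset (Fin n)) :
    Pr p (BadInEv k A) = (1-p)^(Aᶜ.card * A.card) * (1 - (1-p)^A.card)^A.card := by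
  classical
  have h := Pr_block_event (p := p) (SblockIn k A) A (fun u => ScolSub k u A)
    (by
      intro v hv v' hv' hne
      simp only [Function.onFun]
      rw [Finset.disjoint_left]
      intro x hx hx'
      rcases mem_ScolSub.1 hx with ⟨u, _, rfl⟩
      rcases mem_ScolSub.1 hx' with ⟨u', _, h'⟩
      have hvv := congrArg (fun t : Fin m × Fin n × Fin n => t.2.2) h'
      simp at hvv
      exact hne hvv)
    (by
      intro v hv
      rw [Finset.disjoint_left]
      intro x hx hx'
      rcases mem_ScolSub.1 hx with ⟨u, hu, rfl⟩
      rcases mem_SblockIn.1 hx' with ⟨v', hv', u', _, h'⟩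
      have huu : u = v' := by
        have := congrArg (fun t : Fin m × Fin n × Fin n => t.2.1) h'
        simpa using this
      exact (Finset.mem_compl.1 (huu ▸ hv')) hu)
  unfold BadInEv
  rw [h, card_SblockIn]
  congr 1
  rw [Finset.prod_congr rfl fun v hv => by rw [card_ScolSub]]
  rw [Finset.prod_const]

end EventsSec

open Classical in
lemma bernoulliProb_eq (n m : ℕ) (p : ℝ) (E : (Fin m → Matrix (Fin n) (Fin n) ℕ) → Prop) :
    bernoulliProb n m p E = Pr p (fun b : (Fin m × Fin n × Fin n) → Bool =>
      E (fun k => toMat (fun i j => b (k, i, j)))) := by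
  unfold bernoulliProb Pr
  refine Finset.sum_equiv
    (((Equiv.curry (Fin m) (Fin n × Fin n) Bool).trans
      (Equiv.piCongrRight fun _ => Equiv.curry (Fin n) (Fin n) Bool)).symm)
    (fun g => by simp) (fun g _ => ?_)
  refine if_congr Iff.rfl ?_ rfl
  calc ∏ k : Fin m, ∏ i : Fin n, ∏ j : Fin n, (if g k i j then p else 1 - p)
      = ∏ k : Fin m, ∏ y : Fin n × Fin n, wgt p (g k y.1 y.2) :=
        Finset.prod_congr rfl fun k _ =>
          (Fintype.prod_prod_type (fun y : Fin n × Fin n => wgt p (g k y.1 y.2))).symm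
    _ = ∏ x : Fin m × Fin n × Fin n, wgt p (g x.1 x.2.1 x.2.2) :=
        (Fintype.prod_prod_type (fun x : Fin m × Fin n × Fin n => wgt p (g x.1 x.2.1 x.2.2))).symm
    _ = W p (((Equiv.curry (Fin m) (Fin n × Fin n) Bool).trans
          (Equiv.piCongrRight fun _ => Equiv.curry (Fin n) (Fin n) Bool)).symm g) := rfl

lemma toMat_pos {n : ℕ} (g : Fin n → Fin n → Bool) (i j : Fin n) :
    0 < toMat g i j ↔ g i j = true := by
  cases h : g i j <;> simp [toMat, h]


section MainSec
variable {m n : ℕ} {p : ℝ}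

open Classical in
noncomputable def cutFam (n : ℕ) : Finset (Finset (Fin n)) :=
  univ.filter (fun A => A.Nonempty ∧ 2 * A.card ≤ n)

def famEv (q : Fin m × Bool × Fin n) (b : (Fin m × Fin n × Fin n) → Bool) : Prop :=
  ∃ s ∈ (if q.2.1 then SrowSub q.1 q.2.2 univ else ScolSub q.1 q.2.2 univ), b s = true

def AllNZEv (b : (Fin m × Fin n × Fin n) → Bool) : Prop :=
  ∀ q : Fin m × Bool × Fin n, famEv q b

def NoLoopEv (k0 : Fin m) (b : (Fin m × Fin n × Fin n) → Bool) : Prop :=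
  ∀ s ∈ Sdiag (n := n) k0, b s = false

def BadEv (k0 : Fin m) (b : (Fin m × Fin n × Fin n) → Bool) : Prop :=
  NoLoopEv k0 b ∨ (∃ A ∈ cutFam n, BadOutEv k0 A b) ∨ (∃ A ∈ cutFam n, BadInEv k0 A b)

lemma allNZEv_iff (b : (Fin m × Fin n × Fin n) → Bool) :
    AllNZEv b ↔ ∀ k, IsNZ (toMat fun i j => b (k, i, j)) := by
  constructor
  · intro h k
    constructor
    · intro i
      obtain ⟨s, hs, hbs⟩ := h (k, true, i)
      simp only [if_true] at hs
      rcases mem_SrowSub.1 hs with ⟨u, _, rfl⟩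
      exact ⟨u, (toMat_pos _ _ _).2 hbs⟩
    · intro j
      obtain ⟨s, hs, hbs⟩ := h (k, false, j)
      simp only [Bool.false_eq_true, if_false] at hs
      rcases mem_ScolSub.1 hs with ⟨v, _, rfl⟩
      exact ⟨v, (toMat_pos _ _ _).2 hbs⟩
  · rintro h ⟨k, tf, x⟩
    cases tf
    · obtain ⟨v, hv⟩ := (h k).2 x
      refine ⟨(k, v, x), ?_, (toMat_pos _ _ _).1 hv⟩
      simp only [Bool.false_eq_true, if_false]
      exact mem_ScolSub.2 ⟨v, Finset.mem_univ _, rfl⟩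
    · obtain ⟨u, hu⟩ := (h k).1 x
      refine ⟨(k, x, u), ?_, (toMat_pos _ _ _).1 hu⟩
      simp only [if_true]
      exact mem_SrowSub.2 ⟨u, Finset.mem_univ _, rfl⟩

lemma upSet_exists (S : Finset (Fin m × Fin n × Fin n)) :
    UpSet (fun b : (Fin m × Fin n × Fin n) → Bool => ∃ s ∈ S, b s = true) := by
  rintro b b' hb ⟨s, hs, hbs⟩
  have h := hb s
  rw [hbs] at h
  exact ⟨s, hs, (le_antisymm h (Bool.le_true _)).symm⟩

lemma upSet_famEv (q : Fin m × Bool × Fin n) : UpSet (famEv (n := n) q) :=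
  upSet_exists _

lemma Pr_famEv (q : Fin m × Bool × Fin n) :
    Pr p (famEv (n := n) q) = 1 - (1-p)^n := by
  rcases q with ⟨k, tf, x⟩
  cases tf
  · unfold famEv
    simp only [Bool.false_eq_true, if_false]
    rw [Pr_exists_true, card_ScolSub, Finset.card_univ, Fintype.card_fin]
  · unfold famEv
    simp only [if_true]
    rw [Pr_exists_true, card_SrowSub, Finset.card_univ, Fintype.card_fin]

lemma PrAllNZ_ge (h0 : 0 ≤ p) (h1 : p ≤ 1) :
    (1 - (1-p)^n)^(m * (2 * n)) ≤ Pr p (AllNZEv (m := m) (n := n)) := by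
  have h := prod_Pr_le h0 h1 (univ : Finset (Fin m × Bool × Fin n)) famEv
    (fun q _ => upSet_famEv q)
  have e1 : (∏ q : Fin m × Bool × Fin n, Pr p (famEv (n := n) q)) = (1 - (1-p)^n)^(m * (2 * n)) := by
    rw [Finset.prod_congr rfl fun q _ => Pr_famEv q, Finset.prod_const]
    congr 1
    simp [Finset.card_univ]
  have e2 : Pr p (fun b => ∀ q ∈ (univ : Finset (Fin m × Bool × Fin n)), famEv q b)
      = Pr p (AllNZEv (m := m) (n := n)) := by
    refine Pr_congr fun b => ?_
    unfold AllNZEv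
    simp
  rw [e1, e2] at h
  exact h

lemma Pr_NoLoopEv (k0 : Fin m) : Pr p (NoLoopEv (n := n) k0) = (1-p)^n := by
  unfold NoLoopEv
  rw [Pr_forall_false, card_Sdiag]

lemma sum_card_le {f : ℕ → ℝ} (hf : ∀ k, 0 ≤ f k) :
    ∑ A ∈ cutFam n, f A.card ≤ ∑ k ∈ Icc 1 (n/2), (n.choose k : ℝ) * f k := by
  classical
  have hsub : cutFam n ⊆ (Icc 1 (n/2)).biUnion
      (fun k => powersetCard k (univ : Finset (Fin n))) := by
    intro A hA
    rw [cutFam, Finset.mem_filter] at hA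
    obtain ⟨-, hne, hc⟩ := hA
    refine Finset.mem_biUnion.2 ⟨A.card, ?_, Finset.mem_powersetCard.2 ⟨Finset.subset_univ _, rfl⟩⟩
    rw [Finset.mem_Icc]
    constructor
    · exact Finset.card_pos.2 hne
    · omega
  have hdisj : ((Icc 1 (n/2) : Finset ℕ) : Set ℕ).PairwiseDisjoint
      (fun k => powersetCard k (univ : Finset (Fin n))) := by
    intro a _ b _ hab
    simp only [Function.onFun]
    rw [Finset.disjoint_left]
    intro A hA hA'
    exact hab ((Finset.mem_powersetCard.1 hA).2.symm.trans (Finset.mem_powersetCard.1 hA').2)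
  calc ∑ A ∈ cutFam n, f A.card
      ≤ ∑ A ∈ (Icc 1 (n/2)).biUnion (fun k => powersetCard k (univ : Finset (Fin n))), f A.card :=
        Finset.sum_le_sum_of_subset_of_nonneg hsub (fun _ _ _ => hf _)
    _ = ∑ k ∈ Icc 1 (n/2), ∑ A ∈ powersetCard k (univ : Finset (Fin n)), f A.card :=
        Finset.sum_biUnion hdisj
    _ = ∑ k ∈ Icc 1 (n/2), (n.choose k : ℝ) * f k := by
        refine Finset.sum_congr rfl fun k hk => ?_
        rw [Finset.sum_congr rfl fun A hA => by rw [(Finset.mem_powersetCard.1 hA).2],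
          Finset.sum_const, Finset.card_powersetCard, Finset.card_univ, Fintype.card_fin,
          nsmul_eq_mul]

lemma badOut_per_A (h0 : 0 ≤ p) (h1 : p ≤ 1) (k0 : Fin m) {A : Finset (Fin n)}
    (hA : A ∈ cutFam n) :
    Pr p (BadOutEv k0 A) ≤ ((1-p)^(n/2) * ((A.card : ℝ) * p))^A.card := by
  rw [cutFam, Finset.mem_filter] at hA
  obtain ⟨-, hne, hc⟩ := hA
  rw [Pr_BadOutEv]
  have hcompl : Aᶜ.card = n - A.card := by
    rw [Finset.card_compl, Fintype.card_fin]
  have h1p0 : (0:ℝ) ≤ 1 - p := by linarith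
  have h1p1 : (1:ℝ) - p ≤ 1 := by linarith
  have e1 : (1-p)^(A.card * Aᶜ.card) ≤ ((1-p)^(n/2))^A.card := by
    rw [← pow_mul]
    apply pow_le_pow_of_le_one h1p0 h1p1
    rw [hcompl]
    have : n/2 ≤ n - A.card := by omega
    calc n/2 * A.card ≤ (n - A.card) * A.card := Nat.mul_le_mul_right _ this
      _ = A.card * (n - A.card) := Nat.mul_comm _ _
  have e2 : (1 - (1-p)^A.card)^A.card ≤ ((A.card : ℝ) * p)^A.card := by
    apply pow_le_pow_left₀
    · have : (1-p)^A.card ≤ 1 := pow_le_one₀ h1p0 h1p1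
      linarith
    · exact bernoulli_bound h0 h1 A.card
  have hx1 : (1-p)^A.card ≤ 1 := pow_le_one₀ h1p0 h1p1
  calc (1-p)^(A.card * Aᶜ.card) * (1 - (1-p)^A.card)^A.card
      ≤ ((1-p)^(n/2))^A.card * ((A.card : ℝ) * p)^A.card :=
        mul_le_mul e1 e2 (pow_nonneg (by linarith) _) (pow_nonneg (pow_nonneg h1p0 _) _)
    _ = ((1-p)^(n/2) * ((A.card : ℝ) * p))^A.card := (mul_pow _ _ _).symm

lemma badIn_per_A (h0 : 0 ≤ p) (h1 : p ≤ 1) (k0 : Fin m) {A : Finset (Fin n)}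
    (hA : A ∈ cutFam n) :
    Pr p (BadInEv k0 A) ≤ ((1-p)^(n/2) * ((A.card : ℝ) * p))^A.card := by
  have h := badOut_per_A h0 h1 k0 hA
  rw [Pr_BadOutEv] at h
  rw [Pr_BadInEv, Nat.mul_comm]
  exact h

lemma term_le (h0 : 0 ≤ p) (h1 : p ≤ 1) (k : ℕ) :
    (n.choose k : ℝ) * ((1-p)^(n/2) * ((k : ℝ) * p))^k
      ≤ (Real.exp 1 * n * p * (1-p)^(n/2))^k := by
  have h1p0 : (0:ℝ) ≤ 1 - p := by linarith
  have e1 : ((1-p)^(n/2) * ((k : ℝ) * p))^k = ((1-p)^(n/2))^k * ((k:ℝ)^k * p^k) := by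
    rw [mul_pow, mul_pow]
  have e2 : (0:ℝ) ≤ ((1-p)^(n/2))^k * p^k :=
    mul_nonneg (pow_nonneg (pow_nonneg h1p0 _) _) (pow_nonneg h0 _)
  calc (n.choose k : ℝ) * ((1-p)^(n/2) * ((k : ℝ) * p))^k
      = ((n.choose k : ℝ) * (k:ℝ)^k) * (((1-p)^(n/2))^k * p^k) := by rw [e1]; ring
    _ ≤ ((n:ℝ) * Real.exp 1)^k * (((1-p)^(n/2))^k * p^k) :=
        mul_le_mul_of_nonneg_right (choose_mul_bound n k) e2
    _ = (Real.exp 1 * n * p * (1-p)^(n/2))^k := by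
        rw [mul_pow, mul_pow, mul_pow, mul_pow]
        ring

lemma Pr_badEv_le (h0 : 0 ≤ p) (h1 : p ≤ 1) (k0 : Fin m)
    (hβ : Real.exp 1 * n * p * (1-p)^(n/2) ≤ 1/2) :
    Pr p (BadEv (n := n) k0) ≤ (1-p)^n + 4 * (Real.exp 1 * n * p * (1-p)^(n/2)) := by
  set β := Real.exp 1 * n * p * (1-p)^(n/2) with hβdef
  have h1p0 : (0:ℝ) ≤ 1 - p := by linarith
  have hβ0 : 0 ≤ β := by
    rw [hβdef]
    have := Real.exp_pos 1
    exact mul_nonneg (mul_nonneg (mul_nonneg this.le (Nat.cast_nonneg n)) h0)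
      (pow_nonneg h1p0 _)
  have hcommon : ∀ F : Finset (Fin n) → ((Fin m × Fin n × Fin n) → Bool) → Prop,
      (∀ A ∈ cutFam n, Pr p (F A) ≤ ((1-p)^(n/2) * ((A.card : ℝ) * p))^A.card) →
      Pr p (fun b => ∃ A ∈ cutFam n, F A b) ≤ 2 * β := by
    intro F hF
    refine (Pr_exists_le h0 h1 (cutFam n) F).trans ?_
    calc ∑ A ∈ cutFam n, Pr p (F A)
        ≤ ∑ A ∈ cutFam n, ((1-p)^(n/2) * ((A.card : ℝ) * p))^A.card :=
          Finset.sum_le_sum hF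
      _ ≤ ∑ k ∈ Icc 1 (n/2), (n.choose k : ℝ) * ((1-p)^(n/2) * ((k : ℝ) * p))^k :=
          sum_card_le (f := fun k => ((1-p)^(n/2) * ((k : ℝ) * p))^k) (fun k =>
            pow_nonneg (mul_nonneg (pow_nonneg h1p0 _)
              (mul_nonneg (Nat.cast_nonneg k) h0)) _)
      _ ≤ ∑ k ∈ Icc 1 (n/2), β^k := Finset.sum_le_sum fun k _ => term_le h0 h1 k
      _ ≤ 2 * β := geom_tail_le hβ0 hβ (n/2)
  have hout : Pr p (fun b => ∃ A ∈ cutFam n, BadOutEv k0 A b) ≤ 2 * β :=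
    hcommon _ (fun A hA => badOut_per_A h0 h1 k0 hA)
  have hin : Pr p (fun b => ∃ A ∈ cutFam n, BadInEv k0 A b) ≤ 2 * β :=
    hcommon _ (fun A hA => badIn_per_A h0 h1 k0 hA)
  have step1 : Pr p (BadEv (n := n) k0)
      ≤ Pr p (NoLoopEv (n := n) k0)
        + Pr p (fun b => (∃ A ∈ cutFam n, BadOutEv k0 A b) ∨ (∃ A ∈ cutFam n, BadInEv k0 A b)) :=
    Pr_or_le h0 h1 _ _
  have step2 := Pr_or_le h0 h1 (fun b => ∃ A ∈ cutFam n, BadOutEv k0 A b)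
    (fun b => ∃ A ∈ cutFam n, BadInEv k0 A b)
  rw [Pr_NoLoopEv] at step1
  linarith

lemma good_short (k0 : Fin m) (b : (Fin m × Fin n × Fin n) → Bool)
    (hn3 : 3 ≤ n) (hlog : 1 ≤ Real.log n)
    (hNZ : ∀ k, IsNZ (toMat fun i j => b (k, i, j))) (hnb : ¬ BadEv (n := n) k0 b) :
    ∃ w : List (Fin m), w ≠ [] ∧ (w.length : ℝ) ≤ 2 * n * Real.log n ^ 3 ∧
      ∀ i j, 0 < ((w.map (fun k => toMat fun i j => b (k, i, j))).prod) i j := by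
  have hn1 : 1 ≤ n := by omega
  have hnb1 : ¬ NoLoopEv (n := n) k0 b := fun h => hnb (Or.inl h)
  have hnb2 : ∀ A ∈ cutFam n, ¬ BadOutEv k0 A b := by
    intro A hA hbad
    exact hnb (Or.inr (Or.inl ⟨A, hA, hbad⟩))
  have hnb3 : ∀ A ∈ cutFam n, ¬ BadInEv k0 A b := by
    intro A hA hbad
    exact hnb (Or.inr (Or.inr ⟨A, hA, hbad⟩))
  set g : Fin n → Fin n → Bool := fun i j => b (k0, i, j) with hg
  have hrow : ∀ i, ∃ j, g i j = true := by
    intro i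
    obtain ⟨j, hj⟩ := (hNZ k0).1 i
    exact ⟨j, (toMat_pos _ _ _).1 hj⟩
  have hcol : ∀ j, ∃ i, g i j = true := by
    intro j
    obtain ⟨i, hi⟩ := (hNZ k0).2 j
    exact ⟨i, (toMat_pos _ _ _).1 hi⟩
  have hloop : ∃ v, g v v = true := by
    unfold NoLoopEv at hnb1
    push_neg at hnb1
    obtain ⟨s, hs, hbs⟩ := hnb1
    rw [Sdiag, Finset.mem_image] at hs
    obtain ⟨i, _, rfl⟩ := hs
    refine ⟨i, ?_⟩
    show b (k0, i, i) = true
    cases h : b (k0, i, i)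
    · exact absurd h hbs
    · rfl
  have hcutOut : ∀ A : Finset (Fin n), A.Nonempty → 2 * A.card ≤ n →
      ¬((∀ v ∈ A, ∀ u ∈ Aᶜ, g v u = false) ∧ (∀ v ∈ A, ∃ u ∈ A, g v u = true)) := by
    rintro A h1 h2 ⟨c1, c2⟩
    refine hnb2 A (by rw [cutFam, Finset.mem_filter]; exact ⟨Finset.mem_univ _, h1, h2⟩) ⟨?_, ?_⟩
    · intro s hs
      rcases mem_SblockOut.1 hs with ⟨v, hv, u, hu, rfl⟩
      exact c1 v hv u hu
    · intro v hv
      obtain ⟨u, hu, hgu⟩ := c2 v hv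
      exact ⟨(k0, v, u), mem_SrowSub.2 ⟨u, hu, rfl⟩, hgu⟩
  have hcutIn : ∀ A : Finset (Fin n), A.Nonempty → 2 * A.card ≤ n →
      ¬((∀ u ∈ A, ∀ v ∈ Aᶜ, g v u = false) ∧ (∀ u ∈ A, ∃ v ∈ A, g v u = true)) := by
    rintro A h1 h2 ⟨c1, c2⟩
    refine hnb3 A (by rw [cutFam, Finset.mem_filter]; exact ⟨Finset.mem_univ _, h1, h2⟩) ⟨?_, ?_⟩
    · intro s hs
      rcases mem_SblockIn.1 hs with ⟨v, hv, u, hu, rfl⟩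
      exact c1 u hu v hv
    · intro u hu
      obtain ⟨v, hv, hgv⟩ := c2 u hu
      exact ⟨(k0, v, u), mem_ScolSub.2 ⟨v, hv, rfl⟩, hgv⟩
  have hpath := pathN_all hn1 hrow hcol hcutOut hcutIn hloop
  refine ⟨List.replicate (2*n) k0, ?_, ?_, ?_⟩
  · intro h
    have := congrArg List.length h
    simp at this
    omega
  · rw [List.length_replicate]
    have h3 : (1:ℝ) ≤ Real.log n ^ 3 := one_le_pow₀ hlog
    have hn0 : (0:ℝ) ≤ (n:ℝ) := Nat.cast_nonneg n
    push_cast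
    nlinarith
  · intro i j
    rw [List.map_replicate, List.prod_replicate]
    exact pathN_pos (hpath i j)

end MainSec

lemma main_ineq (m n : ℕ) (hm : 1 ≤ m) (p : ℝ) (h0 : 0 ≤ p) (h1 : p ≤ 1)
    (hn3 : 3 ≤ n) (hlog : 1 ≤ Real.log n)
    (hβ : Real.exp 1 * n * p * (1-p)^(n/2) ≤ 1/2)
    (δ : ℝ) (hδ0 : 0 < δ)
    (hδ1 : δ ≤ (1 - (1-p)^n)^(m * (2 * n)))
    (hε : (1-p)^n + 4 * (Real.exp 1 * n * p * (1-p)^(n/2)) ≤ δ/2) :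
    1 - (2/δ) * ((1-p)^n + 4 * (Real.exp 1 * n * p * (1-p)^(n/2)))
      ≤ bernoulliProb n m p (fun M => (∀ k, IsNZ (M k)) ∧ ∃ w : List (Fin m), w ≠ [] ∧
            (w.length : ℝ) ≤ 2 * ↑n * Real.log ↑n ^ 3 ∧ ∀ i j, 0 < (w.map M).prod i j) /
        bernoulliProb n m p (fun M => (∀ k, IsNZ (M k)) ∧ IsPrimitive M)
      ∧ bernoulliProb n m p (fun M => (∀ k, IsNZ (M k)) ∧ ∃ w : List (Fin m), w ≠ [] ∧
            (w.length : ℝ) ≤ 2 * ↑n * Real.log ↑n ^ 3 ∧ ∀ i j, 0 < (w.map M).prod i j) /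
        bernoulliProb n m p (fun M => (∀ k, IsNZ (M k)) ∧ IsPrimitive M) ≤ 1 := by
  classical
  set k0 : Fin m := ⟨0, hm⟩ with hk0
  set ε := (1-p)^n + 4 * (Real.exp 1 * n * p * (1-p)^(n/2)) with hεdef
  rw [bernoulliProb_eq, bernoulliProb_eq]
  set Ev1 : ((Fin m × Fin n × Fin n) → Bool) → Prop := fun b =>
    (∀ k, IsNZ ((fun k => toMat (fun i j => b (k, i, j))) k)) ∧ ∃ w : List (Fin m), w ≠ [] ∧
      (w.length : ℝ) ≤ 2 * ↑n * Real.log ↑n ^ 3 ∧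
      ∀ i j, 0 < ((w.map (fun k => toMat (fun i j => b (k, i, j)))).prod) i j with hEv1
  set Ev2 : ((Fin m × Fin n × Fin n) → Bool) → Prop := fun b =>
    (∀ k, IsNZ ((fun k => toMat (fun i j => b (k, i, j))) k)) ∧
      IsPrimitive (fun k => toMat (fun i j => b (k, i, j))) with hEv2
  set Num := Pr p Ev1 with hNum
  set Den := Pr p Ev2 with hDen
  have hANZ : δ ≤ Pr p (AllNZEv (m := m) (n := n)) := hδ1.trans (PrAllNZ_ge h0 h1)
  have hBad : Pr p (BadEv (n := n) k0) ≤ ε := Pr_badEv_le h0 h1 k0 hβ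
  have hε0 : 0 ≤ ε := by
    rw [hεdef]
    have e1 : (0:ℝ) ≤ (1-p)^n := pow_nonneg (by linarith) n
    have e2 : (0:ℝ) ≤ Real.exp 1 * n * p * (1-p)^(n/2) :=
      mul_nonneg (mul_nonneg (mul_nonneg (Real.exp_pos 1).le (Nat.cast_nonneg n)) h0)
        (pow_nonneg (by linarith) _)
    linarith
  have hsplit : ∀ b, (∀ k, IsNZ (toMat fun i j => b (k, i, j))) → (Ev1 b ∨ BadEv (n := n) k0 b) := by
    intro b hNZ
    by_cases hb : BadEv (n := n) k0 b
    · exact Or.inr hb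
    · left
      rw [hEv1]
      exact ⟨hNZ, good_short k0 b hn3 hlog hNZ hb⟩
  have hNum_le_Den : Num ≤ Den := by
    refine Pr_mono h0 h1 fun b hb => ?_
    rw [hEv1] at hb
    rw [hEv2]
    obtain ⟨hNZ, w, hw1, _, hw3⟩ := hb
    exact ⟨hNZ, w, hw1, hw3⟩
  have hDen_le : Den ≤ Num + ε := by
    have step : Den ≤ Pr p (fun b => Ev1 b ∨ BadEv (n := n) k0 b) := by
      refine Pr_mono h0 h1 fun b hb => ?_
      rw [hEv2] at hb
      exact hsplit b hb.1
    refine step.trans ((Pr_or_le h0 h1 _ _).trans ?_)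
    linarith
  have hANZ_le : Pr p (AllNZEv (m := m) (n := n)) ≤ Num + ε := by
    have step : Pr p (AllNZEv (m := m) (n := n)) ≤ Pr p (fun b => Ev1 b ∨ BadEv (n := n) k0 b) := by
      refine Pr_mono h0 h1 fun b hb => ?_
      exact hsplit b ((allNZEv_iff b).1 hb)
    refine step.trans ((Pr_or_le h0 h1 _ _).trans ?_)
    linarith
  clear_value ε Num Den
  have hNum_ge : δ - ε ≤ Num := by linarith
  have hNum_pos : 0 < Num := by linarith
  have hDen_pos : 0 < Den := lt_of_lt_of_le hNum_pos hNum_le_Den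
  have hD2 : δ/2 ≤ Den := by linarith
  constructor
  · rw [le_div_iff₀ hDen_pos]
    have hz0 : (0:ℝ) ≤ (2/δ) * ε := mul_nonneg (by positivity) hε0
    have hkey : (2/δ) * ε * (δ/2) ≤ (2/δ) * ε * Den := mul_le_mul_of_nonneg_left hD2 hz0
    have heq : (2/δ) * ε * (δ/2) = ε := by field_simp
    nlinarith [hDen_le, hkey, heq]
  · rw [div_le_one hDen_pos]
    exact hNum_le_Den

theorem stmt5' (m : ℕ) (hm : 2 ≤ m) (c : ℝ) :
    ∃ C : ℝ, 0 < C ∧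
      Tendsto (fun n : ℕ =>
        bernoulliProb n m ((Real.log n + c) / n)
          (fun M => (∀ k, IsNZ (M k)) ∧ ∃ w : List (Fin m), w ≠ [] ∧
            (w.length : ℝ) ≤ C * n * Real.log n ^ 3 ∧
            ∀ i j, 0 < (w.map M).prod i j) /
        bernoulliProb n m ((Real.log n + c) / n)
          (fun M => (∀ k, IsNZ (M k)) ∧ IsPrimitive M))
      atTop (nhds 1) := by
  refine ⟨2, by norm_num, ?_⟩
  have hm1 : 1 ≤ m := by omega
  set P : ℕ → ℝ := fun n => (Real.log n + c) / n with hP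
  set q : ℕ → ℝ := fun n => (1 - P n)^n with hq
  set β : ℕ → ℝ := fun n => Real.exp 1 * n * P n * (1 - P n)^(n/2) with hβf
  set ε : ℕ → ℝ := fun n => q n + 4 * β n with hεf
  set δ : ℝ := Real.exp (-((4 * m : ℝ) * Real.exp (-c))) with hδf
  have hδ0 : 0 < δ := Real.exp_pos _
  -- eventual basic facts
  have hlogT : Tendsto (fun n : ℕ => Real.log n) atTop atTop :=
    Real.tendsto_log_atTop.comp tendsto_natCast_atTop_atTop
  have evn3 : ∀ᶠ n : ℕ in atTop, 3 ≤ n := eventually_ge_atTop 3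
  have evlog : ∀ᶠ n : ℕ in atTop, 1 ≤ Real.log n := hlogT.eventually_ge_atTop 1
  have evP0 : ∀ᶠ n : ℕ in atTop, 0 ≤ P n := by
    filter_upwards [hlogT.eventually_ge_atTop (-c), eventually_ge_atTop 1] with n h1 h2
    rw [hP]
    have : (0:ℝ) ≤ Real.log n + c := by linarith
    positivity
  have hPT : Tendsto P atTop (nhds 0) := by
    have h1 : Tendsto (fun n : ℕ => Real.log n / n) atTop (nhds 0) :=
      (Real.isLittleO_log_id_atTop.tendsto_div_nhds_zero).comp tendsto_natCast_atTop_atTop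
    have h2 := tendsto_const_div_atTop_nhds_zero_nat c
    have h3 := h1.add h2
    rw [add_zero] at h3
    refine h3.congr fun n => ?_
    rw [hP]
    rw [← add_div]
  have evP1 : ∀ᶠ n : ℕ in atTop, P n ≤ 1 := by
    filter_upwards [hPT.eventually_lt_const (by norm_num : (0:ℝ) < 1)] with n h
    exact h.le
  -- q bound
  have evqb : ∀ᶠ n : ℕ in atTop, q n ≤ Real.exp (-c) / n := by
    filter_upwards [evP0, evP1, eventually_ge_atTop 1] with n h0 h1 hn1
    have hn0 : (0:ℝ) < n := by exact_mod_cast hn1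
    have e1 : q n ≤ Real.exp (-(P n * n)) := pow_one_sub_le_exp h1 n
    have e2 : P n * n = Real.log n + c := by
      rw [hP]
      field_simp
    rw [e2] at e1
    refine e1.trans (le_of_eq ?_)
    rw [neg_add, Real.exp_add, Real.exp_neg, Real.exp_log hn0]
    ring
  have evq0 : ∀ᶠ n : ℕ in atTop, 0 ≤ q n := by
    filter_upwards [evP1] with n h1
    exact pow_nonneg (by linarith) n
  have hqT : Tendsto q atTop (nhds 0) := by
    refine tendsto_of_tendsto_of_tendsto_of_le_of_le' tendsto_const_nhds
      (tendsto_const_div_atTop_nhds_zero_nat (Real.exp (-c))) evq0 evqb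
  -- β bound
  have evβb : ∀ᶠ n : ℕ in atTop, β n ≤
      Real.exp 1 ^ 2 * ((Real.log n + c) * Real.exp (-(Real.log n + c)/2)) := by
    filter_upwards [evP0, evP1, eventually_ge_atTop 1, hlogT.eventually_ge_atTop (-c)]
      with n h0 h1 hn1 hyc
    have hn0 : (0:ℝ) < n := by exact_mod_cast hn1
    set y := Real.log n + c with hy
    have hy0 : 0 ≤ y := by rw [hy]; linarith
    have hPn : P n * n = y := by rw [hP, hy]; field_simp
    have hhalf : ((n:ℝ) - 1)/2 ≤ ((n/2 : ℕ) : ℝ) := by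
      have h2 : (n - 1 : ℕ) ≤ 2 * (n/2) := by omega
      have h3 : ((n - 1 : ℕ) : ℝ) = (n:ℝ) - 1 := by
        have : 1 ≤ n := hn1
        push_cast [this]
        ring
      have h4 : ((n - 1 : ℕ):ℝ) ≤ ((2 * (n/2) : ℕ) : ℝ) := by exact_mod_cast h2
      rw [h3] at h4
      push_cast at h4
      linarith
    have e1 : (1 - P n)^(n/2) ≤ Real.exp (-(P n * ((n/2 : ℕ):ℝ))) :=
      pow_one_sub_le_exp h1 (n/2)
    have e2 : Real.exp (-(P n * ((n/2 : ℕ):ℝ))) ≤ Real.exp (-( (y - 1)/2 )) := by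
      rw [Real.exp_le_exp]
      have hstep : (y - 1)/2 ≤ P n * ((n/2 : ℕ):ℝ) := by
        have hP1 : P n * (((n:ℝ) - 1)/2) ≤ P n * ((n/2 : ℕ):ℝ) :=
          mul_le_mul_of_nonneg_left hhalf h0
        have : P n * (((n:ℝ) - 1)/2) = (y - P n)/2 := by
          rw [← hPn]; ring
        rw [this] at hP1
        have : (y - 1)/2 ≤ (y - P n)/2 := by linarith
        linarith
      linarith
    have e3 : Real.exp (-((y - 1)/2)) = Real.exp (1/2) * Real.exp (-y/2) := by
      rw [← Real.exp_add]
      congr 1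
      ring
    have e4 : Real.exp (1/2) ≤ Real.exp 1 := by
      rw [Real.exp_le_exp]; norm_num
    have hfac0 : 0 ≤ Real.exp 1 * n * P n := by positivity
    calc β n = (Real.exp 1 * n * P n) * (1 - P n)^(n/2) := by rw [hβf]
      _ ≤ (Real.exp 1 * n * P n) * (Real.exp 1 * Real.exp (-y/2)) := by
          refine mul_le_mul_of_nonneg_left ?_ hfac0
          refine (e1.trans e2).trans ?_
          rw [e3]
          exact mul_le_mul_of_nonneg_right e4 (Real.exp_pos _).le
      _ = Real.exp 1 ^ 2 * (y * Real.exp (-y/2)) := by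
          have : Real.exp 1 * (n:ℝ) * P n = Real.exp 1 * y := by
            rw [mul_assoc, mul_comm (n:ℝ) (P n), hPn]
          rw [this]
          ring
  have evβ0 : ∀ᶠ n : ℕ in atTop, 0 ≤ β n := by
    filter_upwards [evP0, evP1] with n h0 h1
    rw [hβf]
    have : (0:ℝ) ≤ 1 - P n := by linarith
    positivity
  have hβT : Tendsto β atTop (nhds 0) := by
    have hyT : Tendsto (fun n : ℕ => Real.log n + c) atTop atTop :=
      tendsto_atTop_add_const_right _ c hlogT
    have hφ : Tendsto (fun t : ℝ => t * Real.exp (-t/2)) atTop (nhds 0) := by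
      have h1 := (Real.tendsto_pow_mul_exp_neg_atTop_nhds_zero 1).comp
        (tendsto_id.atTop_div_const (by norm_num : (0:ℝ) < 2))
      have h2 := h1.const_mul 2
      rw [mul_zero] at h2
      refine h2.congr fun t => ?_
      simp only [Function.comp, id_eq, pow_one]
      ring_nf
    have hcomp := (hφ.comp hyT).const_mul (Real.exp 1 ^ 2)
    rw [mul_zero] at hcomp
    have hub : Tendsto (fun n : ℕ =>
        Real.exp 1 ^ 2 * ((Real.log n + c) * Real.exp (-(Real.log n + c)/2)))
        atTop (nhds 0) := by
      refine hcomp.congr fun n => ?_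
      simp only [Function.comp]
    exact tendsto_of_tendsto_of_tendsto_of_le_of_le' tendsto_const_nhds hub evβ0 evβb
  have hεT : Tendsto ε atTop (nhds 0) := by
    have h := hqT.add (hβT.const_mul 4)
    rw [mul_zero, add_zero] at h
    exact h
  -- eventual hypotheses of main_ineq
  have evβhalf : ∀ᶠ n : ℕ in atTop, β n ≤ 1/2 := by
    filter_upwards [hβT.eventually_lt_const (by norm_num : (0:ℝ) < 1/2)] with n h
    exact h.le
  have evδ : ∀ᶠ n : ℕ in atTop, δ ≤ (1 - q n)^(m * (2 * n)) := by
    filter_upwards [evqb, evq0, hqT.eventually_lt_const (by norm_num : (0:ℝ) < 1/2),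
      eventually_ge_atTop 1] with n hqb hq0 hqhalf hn1
    have hn0 : (0:ℝ) < n := by exact_mod_cast hn1
    have e1 : Real.exp (-(2 * q n)) ≤ 1 - q n := exp_neg_two_le_one_sub hq0 hqhalf.le
    have e2 : Real.exp (-(2 * q n))^(m * (2*n)) ≤ (1 - q n)^(m * (2*n)) :=
      pow_le_pow_left₀ (Real.exp_pos _).le e1 _
    refine le_trans ?_ e2
    rw [← Real.exp_nat_mul]
    rw [hδf, Real.exp_le_exp]
    have hnq : (n:ℝ) * q n ≤ Real.exp (-c) := by
      calc (n:ℝ) * q n ≤ (n:ℝ) * (Real.exp (-c)/n) :=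
            mul_le_mul_of_nonneg_left hqb hn0.le
        _ = Real.exp (-c) := by field_simp
    have hcast : ((m * (2*n) : ℕ):ℝ) = (m:ℝ) * (2*(n:ℝ)) := by push_cast; ring
    rw [hcast]
    have hm0 : (0:ℝ) ≤ (m:ℝ) := Nat.cast_nonneg m
    nlinarith [hq0, hnq, hm0, mul_le_mul_of_nonneg_left hnq hm0]
  have evεδ : ∀ᶠ n : ℕ in atTop, ε n ≤ δ/2 := by
    filter_upwards [hεT.eventually_lt_const (by positivity : (0:ℝ) < δ/2)] with n h
    exact h.le
  -- final bound application
  have evmain : ∀ᶠ n : ℕ in atTop,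
      1 - (2/δ) * ε n ≤ (fun n : ℕ =>
        bernoulliProb n m ((Real.log n + c) / n)
          (fun M => (∀ k, IsNZ (M k)) ∧ ∃ w : List (Fin m), w ≠ [] ∧
            (w.length : ℝ) ≤ 2 * n * Real.log n ^ 3 ∧
            ∀ i j, 0 < (w.map M).prod i j) /
        bernoulliProb n m ((Real.log n + c) / n)
          (fun M => (∀ k, IsNZ (M k)) ∧ IsPrimitive M)) n ∧
      (fun n : ℕ =>
        bernoulliProb n m ((Real.log n + c) / n)
          (fun M => (∀ k, IsNZ (M k)) ∧ ∃ w : List (Fin m), w ≠ [] ∧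
            (w.length : ℝ) ≤ 2 * n * Real.log n ^ 3 ∧
            ∀ i j, 0 < (w.map M).prod i j) /
        bernoulliProb n m ((Real.log n + c) / n)
          (fun M => (∀ k, IsNZ (M k)) ∧ IsPrimitive M)) n ≤ 1 := by
    filter_upwards [evn3, evlog, evP0, evP1, evβhalf, evδ, evεδ]
      with n hn3 hlog h0 h1 hbh hδ1 hεδ
    have := main_ineq m n hm1 (P n) h0 h1 hn3 hlog hbh δ hδ0 hδ1 hεδ
    exact this
  have hlow : Tendsto (fun n : ℕ => 1 - (2/δ) * ε n) atTop (nhds 1) := by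
    have h := (hεT.const_mul (2/δ)).const_sub 1
    rw [mul_zero, sub_zero] at h
    exact h
  refine tendsto_of_tendsto_of_tendsto_of_le_of_le' hlow tendsto_const_nhds
    (evmain.mono fun n h => h.1) (evmain.mono fun n h => h.2)

end Stmt5

/-- Let `m ≥ 2`, `c ∈ ℝ` and `p̂ n = (log n + c)/n`.  There is a constant `C > 0` such
that the conditional probability that `exp(B_m(n, p̂ n)) ≤ C · n · (log n)³`, given that
every matrix of `B_m(n, p̂ n)` is NZ and the set is primitive, tends to `1` as `n → ∞`.
(The conditional probability is expressed as the quotient of the probability of the joint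
event by the probability of the conditioning event.) -/
theorem stmt5 (m : ℕ) (hm : 2 ≤ m) (c : ℝ) :
    ∃ C : ℝ, 0 < C ∧
      Tendsto (fun n : ℕ =>
        bernoulliProb n m ((Real.log n + c) / n)
          (fun M => (∀ k, IsNZ (M k)) ∧ ∃ w : List (Fin m), w ≠ [] ∧
            (w.length : ℝ) ≤ C * n * Real.log n ^ 3 ∧
            ∀ i j, 0 < (w.map M).prod i j) /
        bernoulliProb n m ((Real.log n + c) / n)
          (fun M => (∀ k, IsNZ (M k)) ∧ IsPrimitive M))
      atTop (nhds 1) := by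
  exact Stmt5.stmt5' m hm c
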